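/- arXiv:1603.09275 — 4 statements merged into one kernel-verified Lean document; each statement's English description precedes it below -/
import Mathlib

section
/- The bicyclic semigroup has the Howson property: the intersection of any two finitely generated inverse subsemigroups of the bicyclic semigroup is finitely generated. -/
inductive InvGen {S : Type*} [Mul S] [Inv S] (X : Set S) : S → Prop
  | base {x : S} : x ∈ X → InvGen X x
  | mul {a b : S} : InvGen X a → InvGen X b → InvGen X (a * b)
  | inv {a : S} : InvGen X a → InvGen X a⁻¹

def IsInvSub {S : Type*} [Mul S] [Inv S] (T : Set S) : Prop :=
  (∀ a ∈ T, ∀ b ∈ T, a * b ∈ T) ∧ ∀ a ∈ T, a⁻¹ ∈ T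

def InvFG {S : Type*} [Mul S] [Inv S] (T : Set S) : Prop :=
  ∃ X : Finset S, ↑X ⊆ T ∧ T = {s | InvGen (↑X : Set S) s}

def Howson (S : Type*) [Mul S] [Inv S] : Prop :=
  ∀ U V : Set S, IsInvSub U → IsInvSub V → InvFG U → InvFG V → InvFG (U ∩ V)
def Bicyclic := ℕ × ℕ

instance : Mul Bicyclic :=
  ⟨fun a b => ((a.1 + b.1 - min a.2 b.1, a.2 + b.2 - min a.2 b.1) : ℕ × ℕ)⟩

instance : Inv Bicyclic := ⟨fun a => ((a.2, a.1) : ℕ × ℕ)⟩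

lemma mulmem {T : Set Bicyclic} (hT : IsInvSub T) {a b c d x y : ℕ}
    (h1 : ((a,b) : Bicyclic) ∈ T) (h2 : ((c,d) : Bicyclic) ∈ T)
    (hx : a + c - min b c = x) (hy : b + d - min b c = y) :
    ((x,y) : Bicyclic) ∈ T := by
  subst hx hy; exact hT.1 _ h1 _ h2

lemma invmem {T : Set Bicyclic} (hT : IsInvSub T) {a b : ℕ}
    (h : ((a,b) : Bicyclic) ∈ T) : ((b,a) : Bicyclic) ∈ T := hT.2 _ h

lemma genmul {X : Set Bicyclic} {a b c d x y : ℕ}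
    (h1 : InvGen X ((a,b) : Bicyclic)) (h2 : InvGen X ((c,d) : Bicyclic))
    (hx : a + c - min b c = x) (hy : b + d - min b c = y) :
    InvGen X ((x,y) : Bicyclic) := by
  subst hx hy; exact InvGen.mul h1 h2

lemma geninv {X : Set Bicyclic} {a b : ℕ}
    (h : InvGen X ((a,b) : Bicyclic)) : InvGen X ((b,a) : Bicyclic) := InvGen.inv h

lemma invGen_le {S : Type*} [Mul S] [Inv S] {X T : Set S} (hT : IsInvSub T)
    (hX : X ⊆ T) : ∀ s, InvGen X s → s ∈ T := by
  intro s h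
  induction h with
  | base h => exact hX h
  | mul _ _ ih1 ih2 => exact hT.1 _ ih1 _ ih2
  | inv _ ih => exact hT.2 _ ih

lemma Lpow {T : Set Bicyclic} (hT : IsInvSub T) {a j : ℕ}
    (h : ((a, a+j) : Bicyclic) ∈ T) : ∀ n, ((a, a+(n+1)*j) : Bicyclic) ∈ T := by
  intro n
  induction n with
  | zero => simpa using h
  | succ n ih =>
    have e : (n+1+1)*j = (n+1)*j + j := by ring
    rw [e, ← add_assoc]
    generalize hq : (n+1)*j = q at ih ⊢
    exact mulmem hT ih h (by omega) (by omega)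

/-- difference subtraction: if differences j < l occur, so does l - j. -/
lemma Ldiffsub {T : Set Bicyclic} (hT : IsInvSub T) {a b j l : ℕ}
    (hd : ((a, a+j) : Bicyclic) ∈ T) (hl : ((b, b+l) : Bicyclic) ∈ T) (hjl : j < l) :
    ∃ c, ((c, c + (l - j)) : Bicyclic) ∈ T := by
  have h1 := invmem hT hd
  rcases le_total a b with h | h
  · exact ⟨b + j, mulmem hT h1 hl (by omega) (by omega)⟩
  · exact ⟨a + j, mulmem hT h1 hl (by omega) (by omega)⟩

/-- Main structural lemma: inverse subsemigroup containing a non-idempotent is f.g. -/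
lemma fg_of_nonidem {T : Set Bicyclic} (hT : IsInvSub T) {p k : ℕ} (hk : 0 < k)
    (hpk : ((p, p+k) : Bicyclic) ∈ T) : InvFG T := by
  classical
  -- minimal positive difference d
  have hexd : ∃ j, 0 < j ∧ ∃ a, ((a, a+j) : Bicyclic) ∈ T := ⟨k, hk, p, hpk⟩
  set d := Nat.find hexd with hd_def
  obtain ⟨hdpos, c, hc⟩ := Nat.find_spec hexd
  have hdmin : ∀ j, 0 < j → (∃ a, ((a, a+j) : Bicyclic) ∈ T) → d ≤ j :=
    fun j h1 h2 => Nat.find_min' hexd ⟨h1, h2⟩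
  have hdvd : ∀ j, 0 < j → (∃ a, ((a, a+j) : Bicyclic) ∈ T) → d ∣ j := by
    intro j
    induction j using Nat.strong_induction_on with
    | _ j ih =>
      rintro hj ⟨a, ha⟩
      have hdj := hdmin j hj ⟨a, ha⟩
      rcases eq_or_lt_of_le hdj with h | h
      · exact h ▸ dvd_refl d
      · obtain ⟨c', hc'⟩ := Ldiffsub hT hc ha h
        have hsub : d ∣ (j - d) := ih (j - d) (by omega) (by omega) ⟨c', hc'⟩
        have := dvd_add hsub (dvd_refl d)
        rwa [Nat.sub_add_cancel hdj] at this
  -- minimal corner m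
  have hexm : ∃ a, ∃ j, 0 < j ∧ ((a, a+j) : Bicyclic) ∈ T := ⟨p, k, hk, hpk⟩
  set m := Nat.find hexm with hm_def
  obtain ⟨k₀, hk₀, hmk₀⟩ := Nat.find_spec hexm
  have hmmin : ∀ a j, 0 < j → ((a, a+j) : Bicyclic) ∈ T → m ≤ a :=
    fun a j h1 h2 => Nat.find_min' hexm ⟨j, h1, h2⟩
  have hcm : m ≤ c := hmmin c d hdpos hc
  -- grow differences at corner m
  have hgrow : ∀ n, ∃ j, n ≤ j ∧ 0 < j ∧ ((m, m+j) : Bicyclic) ∈ T := by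
    intro n
    induction n with
    | zero => exact ⟨k₀, by omega, hk₀, hmk₀⟩
    | succ n ih =>
      obtain ⟨j, h1, h2, h3⟩ := ih
      exact ⟨j + j, by omega, by omega, mulmem hT h3 h3 (by omega) (by omega)⟩
  -- (m, m+d) ∈ T
  obtain ⟨j, hj1, hj2, hj3⟩ := hgrow c
  have hjd : ((m, m + (j + d)) : Bicyclic) ∈ T := mulmem hT hj3 hc (by omega) (by omega)
  have hmd : ((m, m+d) : Bicyclic) ∈ T := by
    have h1 : ((m + d, m) : Bicyclic) ∈ T := mulmem hT hj3 (invmem hT hjd) (by omega) (by omega)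
    exact invmem hT h1
  -- descend difference by d at any corner
  have hdown : ∀ a jj, d < jj → ((a, a+jj) : Bicyclic) ∈ T → ((a, a + (jj - d)) : Bicyclic) ∈ T := by
    intro a jj h1 h2
    have hma : m ≤ a := hmmin a jj (by omega) h2
    exact mulmem hT h2 (invmem hT hmd) (by omega) (by omega)
  -- corner with any difference has difference d
  have hcorner_d : ∀ jj a, 0 < jj → ((a, a+jj) : Bicyclic) ∈ T → ((a, a+d) : Bicyclic) ∈ T := by
    intro jj
    induction jj using Nat.strong_induction_on with
    | _ jj ih =>
      intro a h1 h2
      have hdj : d ≤ jj := hdmin jj h1 ⟨a, h2⟩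
      rcases eq_or_lt_of_le hdj with h | h
      · rw [← h] at h2; exact h2
      · exact ih (jj - d) (by omega) a (by omega) (hdown a jj h h2)
  -- generating set
  set X : Finset Bicyclic :=
      ((Finset.range m).filter fun a => ((a,a) : Bicyclic) ∈ T).image
        (fun a => ((a,a) : Bicyclic)) ∪
      ((Finset.range (m+d)).filter fun r => ((r, r+d) : Bicyclic) ∈ T).image
        (fun r => ((r, r+d) : Bicyclic)) with hX_def
  have hXsub : (↑X : Set Bicyclic) ⊆ T := by
    intro s hs
    rcases Finset.mem_union.mp (Finset.mem_coe.mp hs) with h | h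
    · obtain ⟨a, ha, rfl⟩ := Finset.mem_image.mp h; exact (Finset.mem_filter.mp ha).2
    · obtain ⟨r, hr, rfl⟩ := Finset.mem_image.mp h; exact (Finset.mem_filter.mp hr).2
  have hmemX1 : ∀ a, a < m → ((a,a) : Bicyclic) ∈ T → ((a,a) : Bicyclic) ∈ (↑X : Set Bicyclic) := by
    intro a h1 h2
    exact Finset.mem_coe.mpr ((Finset.mem_union (α := Bicyclic)).mpr (Or.inl ((Finset.mem_image (β := Bicyclic)).mpr
      ⟨a, Finset.mem_filter.mpr ⟨Finset.mem_range.mpr h1, h2⟩, rfl⟩)))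
  have hmemX2 : ∀ r, r < m + d → ((r, r+d) : Bicyclic) ∈ T →
      ((r, r+d) : Bicyclic) ∈ (↑X : Set Bicyclic) := by
    intro r h1 h2
    exact Finset.mem_coe.mpr ((Finset.mem_union (α := Bicyclic)).mpr (Or.inr ((Finset.mem_image (β := Bicyclic)).mpr
      ⟨r, Finset.mem_filter.mpr ⟨Finset.mem_range.mpr h1, h2⟩, rfl⟩)))
  -- key: every (a, a+d) in T is generated
  have hgen_d : ∀ a, ((a, a+d) : Bicyclic) ∈ T → InvGen (↑X : Set Bicyclic) ((a, a+d) : Bicyclic) := by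
    intro a
    induction a using Nat.strong_induction_on with
    | _ a ih =>
      intro ha
      have hma : m ≤ a := hmmin a d hdpos ha
      by_cases hcase : a < m + d
      · exact InvGen.base (hmemX2 a hcase ha)
      · push_neg at hcase
        have h1 : ((a - d, a + d) : Bicyclic) ∈ T := mulmem hT hmd ha (by omega) (by omega)
        have h1' : ((a - d, (a - d) + (2*d)) : Bicyclic) ∈ T := by
          have e : (a - d) + 2*d = a + d := by omega
          rw [e]; exact h1
        have h2 : ((a - d, (a - d) + d) : Bicyclic) ∈ T := hcorner_d (2*d) (a-d) (by omega) h1'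
        have ihg := ih (a - d) (by omega) h2
        have e : a - d + d = a := by omega
        rw [e] at ihg
        have g2 : InvGen (↑X : Set Bicyclic) ((a - d, a + d) : Bicyclic) :=
          genmul ihg ihg (by omega) (by omega)
        exact genmul (geninv ihg) g2 (by omega) (by omega)
  -- all multiples of d are generated
  have hgen_mult : ∀ jj a, d ∣ jj → 0 < jj → ((a, a+d) : Bicyclic) ∈ T →
      InvGen (↑X : Set Bicyclic) ((a, a+jj) : Bicyclic) := by
    intro jj
    induction jj using Nat.strong_induction_on with
    | _ jj ih =>
      intro a hdj hpos ha
      have hdle : d ≤ jj := Nat.le_of_dvd hpos hdj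
      rcases eq_or_lt_of_le hdle with h | h
      · rw [← h]; exact hgen_d a ha
      · have hprev := ih (jj - d) (by omega) a (Nat.dvd_sub hdj dvd_rfl) (by omega) ha
        exact genmul hprev (hgen_d a ha) (by omega) (by omega)
  -- any non-idempotent (a,b), a<b, of T is generated
  have hlt : ∀ a b, a < b → ((a, b) : Bicyclic) ∈ T → InvGen (↑X : Set Bicyclic) ((a, b) : Bicyclic) := by
    intro a b h hs
    have h2 : ((a, a + (b - a)) : Bicyclic) ∈ T := by
      have e : a + (b - a) = b := by omega
      rw [e]; exact hs
    have hda : d ∣ (b - a) := hdvd (b - a) (by omega) ⟨a, h2⟩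
    have had : ((a, a+d) : Bicyclic) ∈ T := hcorner_d (b - a) a (by omega) h2
    have hg := hgen_mult (b - a) a hda (by omega) had
    have e : a + (b - a) = b := by omega
    rwa [e] at hg
  refine ⟨X, hXsub, Set.ext fun s => ⟨?_, fun hs => invGen_le hT hXsub s hs⟩⟩
  intro hs
  obtain ⟨a, b⟩ := s
  rcases lt_trichotomy a b with h | h | h
  · exact hlt a b h hs
  · subst h
    by_cases hma : a < m
    · exact InvGen.base (hmemX1 a hma hs)
    · push_neg at hma
      have had : ((a, a+d) : Bicyclic) ∈ T := mulmem hT hs hmd (by omega) (by omega)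
      have g := hgen_d a had
      exact genmul g (geninv g) (by omega) (by omega)
  · exact geninv (hlt b a h (invmem hT hs))

/-- finite closed sets are f.g. -/
lemma fg_of_finite {S : Type*} [Mul S] [Inv S] {T : Set S} (hT : IsInvSub T)
    (h : T.Finite) : InvFG T := by
  refine ⟨h.toFinset, by simp, Set.ext fun s => ⟨fun hs => InvGen.base (by simpa using hs),
    fun hs => invGen_le hT (by simp) s hs⟩⟩

/-- an f.g. inverse subsemigroup consisting only of idempotents is finite. -/
lemma finite_of_fg_idem {U : Set Bicyclic} (hFU : InvFG U)
    (hid : ∀ x y : ℕ, ((x, y) : Bicyclic) ∈ U → x = y) : U.Finite := by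
  obtain ⟨X, hsub, heq⟩ := hFU
  have key : ∀ s, InvGen (↑X : Set Bicyclic) s → s ∈ (↑X : Set Bicyclic) := by
    intro s h
    induction h with
    | base h => exact h
    | @mul a b ha hb iha ihb =>
      obtain ⟨a1, a2⟩ := a
      obtain ⟨b1, b2⟩ := b
      have ea : a1 = a2 := hid a1 a2 (hsub iha)
      have eb : b1 = b2 := hid b1 b2 (hsub ihb)
      subst ea; subst eb
      show ((a1 + b1 - min a1 b1, a1 + b1 - min a1 b1) : Bicyclic) ∈ (↑X : Set Bicyclic)
      rcases le_total a1 b1 with h | h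
      · have e : ((a1 + b1 - min a1 b1, a1 + b1 - min a1 b1) : Bicyclic) = ((b1, b1) : ℕ × ℕ) := by
          simp only [Prod.mk.injEq]; omega
        rw [e]; exact ihb
      · have e : ((a1 + b1 - min a1 b1, a1 + b1 - min a1 b1) : Bicyclic) = ((a1, a1) : ℕ × ℕ) := by
          simp only [Prod.mk.injEq]; omega
        rw [e]; exact iha
    | @inv a ha iha =>
      obtain ⟨a1, a2⟩ := a
      have ea : a1 = a2 := hid a1 a2 (hsub iha)
      subst ea
      exact iha
  have : U ⊆ (↑X : Set Bicyclic) := by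
    intro s hs
    rw [heq] at hs
    exact key s hs
  exact Set.Finite.subset X.finite_toSet this

lemma exists_nonidem {W : Set Bicyclic} (hW : IsInvSub W)
    (h : ¬ ∀ x y : ℕ, ((x, y) : Bicyclic) ∈ W → x = y) :
    ∃ x k, 0 < k ∧ ((x, x + k) : Bicyclic) ∈ W := by
  push_neg at h
  obtain ⟨x, y, hxy, hne⟩ := h
  rcases Nat.lt_or_ge x y with h | h
  · refine ⟨x, y - x, by omega, ?_⟩
    have e : x + (y - x) = y := by omega
    rw [e]; exact hxy
  · refine ⟨y, x - y, by omega, ?_⟩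
    have e : y + (x - y) = x := by omega
    rw [e]; exact invmem hW hxy

theorem stmt_9 : Howson Bicyclic := by
  intro U V hU hV hFU hFV
  have hUV : IsInvSub (U ∩ V) :=
    ⟨fun a ha b hb => ⟨hU.1 a ha.1 b hb.1, hV.1 a ha.2 b hb.2⟩,
     fun a ha => ⟨hU.2 a ha.1, hV.2 a ha.2⟩⟩
  by_cases hfin : (U ∩ V).Finite
  · exact fg_of_finite hUV hfin
  · -- U and V both contain non-idempotents
    have hnU : ∃ x k, 0 < k ∧ ((x, x + k) : Bicyclic) ∈ U := by
      apply exists_nonidem hU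
      intro hid
      exact hfin (Set.Finite.inter_of_left (finite_of_fg_idem hFU hid) V)
    have hnV : ∃ x k, 0 < k ∧ ((x, x + k) : Bicyclic) ∈ V := by
      apply exists_nonidem hV
      intro hid
      exact hfin (Set.Finite.inter_of_right (finite_of_fg_idem hFV hid) U)
    obtain ⟨x, dU, hdU, hxU⟩ := hnU
    obtain ⟨y, dV, hdV, hyV⟩ := hnV
    by_cases hid2 : ∀ a b : ℕ, ((a, b) : Bicyclic) ∈ U ∩ V → a = b
    · -- all common elements idempotent: manufacture a common non-idempotent
      have hfst : (Prod.fst '' (U ∩ V) : Set ℕ).Infinite := by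
        intro hf
        apply hfin
        apply Set.Finite.of_finite_image hf
        rintro ⟨s1, s2⟩ hs ⟨t1, t2⟩ ht hst
        have es := hid2 s1 s2 hs
        have et := hid2 t1 t2 ht
        have : s1 = t1 := hst
        subst es; subst et; subst this; rfl
      obtain ⟨a, ⟨s, hs, hsa⟩, hax⟩ := hfst.exists_gt (x + y)
      obtain ⟨s1, s2⟩ := s
      have es := hid2 s1 s2 hs
      subst es
      have ea : s1 = a := hsa
      subst ea
      have hxa : x ≤ s1 := by omega
      have hya : y ≤ s1 := by omega
      have h1 : ((s1, s1 + dU) : Bicyclic) ∈ U := mulmem hU hs.1 hxU (by omega) (by omega)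
      have h2 : ((s1, s1 + dV) : Bicyclic) ∈ V := mulmem hV hs.2 hyV (by omega) (by omega)
      have hUp : ((s1, s1 + dV * dU) : Bicyclic) ∈ U := by
        have := Lpow hU h1 (dV - 1)
        have e : (dV - 1 + 1) * dU = dV * dU := by
          have : dV - 1 + 1 = dV := by omega
          rw [this]
        rwa [e] at this
      have hVp : ((s1, s1 + dV * dU) : Bicyclic) ∈ V := by
        have := Lpow hV h2 (dU - 1)
        have e : (dU - 1 + 1) * dV = dV * dU := by
          have h' : dU - 1 + 1 = dU := by omega
          rw [h', Nat.mul_comm]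
        rwa [e] at this
      exact fg_of_nonidem hUV (Nat.mul_pos hdV hdU) ⟨hUp, hVp⟩
    · obtain ⟨p, k, hk, hpk⟩ := exists_nonidem hUV hid2
      exact fg_of_nonidem hUV hk hpk
end

section
/- Let S be an ideal extension of the bicyclic semigroup B by a finite inverse semigroup with zero (i.e., B is an ideal of S and S \ B is finite). Then S has the Howson property. -/
class InverseSemigroup (S : Type*) extends Semigroup S, Inv S where
  mul_inv_mul : ∀ a : S, a * a⁻¹ * a = a
  inv_invol : ∀ a : S, a⁻¹⁻¹ = a
  idem_comm : ∀ a b : S, (a * a⁻¹) * (b * b⁻¹) = (b * b⁻¹) * (a * a⁻¹)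
abbrev bk (a b : ℕ) : Bicyclic := (a, b)
lemma bk_mul (a b c d : ℕ) : bk a b * bk c d = bk (a + c - min b c) (b + d - min b c) := rfl
lemma bk_inv (a b : ℕ) : (bk a b)⁻¹ = bk b a := rfl
lemma bk_eta (t : Bicyclic) : bk t.1 t.2 = t := rfl
lemma bk_ext {a b c d : ℕ} (h1 : a = c) (h2 : b = d) : bk a b = bk c d := by rw [h1, h2]

-- composition law
lemma bk_comp (x y z : ℕ) : bk x y * bk y z = bk x z := by
  rw [bk_mul]; exact bk_ext (by omega) (by omega)
-- up shift: for a ≤ x, (x,x)*(a,b) = (x, x+(b-a))  (assuming a ≤ b)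
lemma bk_up {a b x : ℕ} (hax : a ≤ x) (hab : a ≤ b) :
    bk x x * bk a b = bk x (x + (b - a)) := by
  rw [bk_mul]; exact bk_ext (by omega) (by omega)
-- down shift: for b ≤ y, (a,b)*(y,y) = (y-(b-a), y) (assuming a ≤ b)
lemma bk_down {a b y : ℕ} (hby : b ≤ y) (hab : a ≤ b) :
    bk a b * bk y y = bk (y - (b - a)) y := by
  rw [bk_mul]; exact bk_ext (by omega) (by omega)
-- power step: x ≤ B → (x,B)*(x,x+d) = (x,B+d)
lemma bk_pow {x B d : ℕ} (h : x ≤ B) : bk x B * bk x (x + d) = bk x (B + d) := by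
  rw [bk_mul]; exact bk_ext (by omega) (by omega)

def Reg (d N : ℕ) (T : Set Bicyclic) : Prop :=
  (∀ x y, N ≤ x → (bk x y ∈ T ↔ bk (x + d) y ∈ T)) ∧
  (∀ x y, N ≤ y → (bk x y ∈ T ↔ bk x (y + d) ∈ T))

lemma Reg.iter1 {d N : ℕ} {T : Set Bicyclic} (h : Reg d N T) :
    ∀ (k x y : ℕ), N ≤ x → (bk x y ∈ T ↔ bk (x + k * d) y ∈ T) := by
  intro k
  induction k with
  | zero => intro x y _; simp
  | succ k ih =>
    intro x y hx
    have h1 := ih x y hx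
    have h2 := h.1 (x + k * d) y (by omega)
    rw [show x + (k+1) * d = x + k * d + d by ring]
    tauto

lemma Reg.iter2 {d N : ℕ} {T : Set Bicyclic} (h : Reg d N T) :
    ∀ (k x y : ℕ), N ≤ y → (bk x y ∈ T ↔ bk x (y + k * d) ∈ T) := by
  intro k
  induction k with
  | zero => intro x y _; simp
  | succ k ih =>
    intro x y hy
    have h1 := ih x y hy
    have h2 := h.2 x (y + k * d) (by omega)
    rw [show y + (k+1) * d = y + k * d + d by ring]
    tauto

-- arbitrary shifts along residue class
lemma Reg.shift1 {d N : ℕ} {T : Set Bicyclic} (h : Reg d N T) {x x' : ℕ} (y : ℕ)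
    (hN : N ≤ x') (hle : x' ≤ x) (hdvd : d ∣ x - x') : (bk x y ∈ T ↔ bk x' y ∈ T) := by
  obtain ⟨k, hk⟩ := hdvd
  have := h.iter1 k x' y hN
  have hx : x = x' + k * d := by rw [mul_comm]; omega
  rw [hx]; tauto

lemma Reg.shift2 {d N : ℕ} {T : Set Bicyclic} (h : Reg d N T) {y y' : ℕ} (x : ℕ)
    (hN : N ≤ y') (hle : y' ≤ y) (hdvd : d ∣ y - y') : (bk x y ∈ T ↔ bk x y' ∈ T) := by
  obtain ⟨k, hk⟩ := hdvd
  have := h.iter2 k x y' hN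
  have hy : y = y' + k * d := by rw [mul_comm]; omega
  rw [hy]; tauto

lemma Reg.mul_period {d N : ℕ} {T : Set Bicyclic} (h : Reg d N T) (m : ℕ) :
    Reg (m * d) N T :=
  ⟨fun x y hx => h.iter1 m x y hx, fun x y hy => h.iter2 m x y hy⟩

lemma Reg.mono {d N N' : ℕ} {T : Set Bicyclic} (h : Reg d N T) (hN : N ≤ N') :
    Reg d N' T :=
  ⟨fun x y hx => h.1 x y (le_trans hN hx), fun x y hy => h.2 x y (le_trans hN hy)⟩

lemma Reg.inter {d N : ℕ} {T T' : Set Bicyclic} (h : Reg d N T) (h' : Reg d N T') :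
    Reg d N (T ∩ T') := by
  constructor
  · intro x y hx
    have := h.1 x y hx; have := h'.1 x y hx
    simp only [Set.mem_inter_iff]; tauto
  · intro x y hy
    have := h.2 x y hy; have := h'.2 x y hy
    simp only [Set.mem_inter_iff]; tauto

lemma reg_of_finite {T : Set Bicyclic} (hT : T.Finite) : ∃ d N, 1 ≤ d ∧ Reg d N T := by
  refine ⟨1, 1 + hT.toFinset.sup (fun t => max t.1 t.2), le_refl 1, ?_, ?_⟩ <;>
  · intro x y hxy
    constructor <;> intro hm <;> exfalso <;>
    · have hle : max ((bk _ _ : Bicyclic).1) ((bk _ _ : Bicyclic).2) ≤ _ :=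
        Finset.le_sup (f := fun t : Bicyclic => max t.1 t.2) (hT.mem_toFinset.mpr hm)
      simp only [bk] at hle
      omega

-- Lemma R : an inverse-closed, mul-closed subset containing a nonidempotent is regular.
lemma reg_of_nonidem {T : Set Bicyclic} (hsub : IsInvSub T) {a₀ b₀ : ℕ}
    (hmem : bk a₀ b₀ ∈ T) (hlt : a₀ < b₀) : Reg (b₀ - a₀) a₀ T := by
  set d := b₀ - a₀ with hd
  have hdiagT : ∀ x y, bk x y ∈ T → bk x x ∈ T := by
    intro x y h
    have := hsub.1 _ h _ (hsub.2 _ h)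
    rwa [bk_inv, bk_comp] at this
  have hup : ∀ x, a₀ ≤ x → bk x x ∈ T → bk x (x + d) ∈ T := by
    intro x hx h
    have := hsub.1 _ h _ hmem
    rwa [bk_up hx (le_of_lt hlt)] at this
  have hdown : ∀ y, b₀ ≤ y → bk y y ∈ T → bk (y - d) y ∈ T := by
    intro y hy h
    have := hsub.1 _ hmem _ h
    rwa [bk_down hy (le_of_lt hlt)] at this
  have rule1 : ∀ x y, a₀ ≤ x → (bk x y ∈ T ↔ bk (x + d) y ∈ T) := by
    intro x y hx
    constructor
    · intro h
      have h1 : bk x (x + d) ∈ T := hup x hx (hdiagT _ _ h)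
      have h2 : bk (x + d) x ∈ T := by have := hsub.2 _ h1; rwa [bk_inv] at this
      have := hsub.1 _ h2 _ h
      rwa [bk_comp] at this
    · intro h
      have h1 : bk (x + d) (x + d) ∈ T := hdiagT _ _ h
      have h2 : bk x (x + d) ∈ T := by
        have := hdown (x + d) (by omega) h1
        rwa [show x + d - d = x by omega] at this
      have := hsub.1 _ h2 _ h
      rwa [bk_comp] at this
  constructor
  · exact rule1
  · intro x y hy
    have e1 : ((bk y x : Bicyclic)⁻¹) = bk x y := bk_inv ..
    have e2 : ((bk (y + d) x : Bicyclic)⁻¹) = bk x (y + d) := bk_inv ..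
    constructor
    · intro h
      have hyx : bk y x ∈ T := by have := hsub.2 _ h; rwa [bk_inv] at this
      have := (rule1 y x hy).mp hyx
      have := hsub.2 _ this
      rwa [bk_inv] at this
    · intro h
      have hyx : bk (y + d) x ∈ T := by have := hsub.2 _ h; rwa [bk_inv] at this
      have := (rule1 y x hy).mpr hyx
      have := hsub.2 _ this
      rwa [bk_inv] at this

lemma resid {d N x : ℕ} (hd : 1 ≤ d) (hN : N ≤ x) :
    ∃ x₀ k, x = x₀ + k * d ∧ N ≤ x₀ ∧ x₀ < N + d ∧ d ∣ x - x₀ := by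
  refine ⟨N + (x - N) % d, (x - N) / d, ?_, by omega, ?_, ⟨(x - N) / d, ?_⟩⟩
  · have h := Nat.div_add_mod (x - N) d
    have hc : ((x - N) / d) * d = d * ((x - N) / d) := mul_comm _ _
    omega
  · have := Nat.mod_lt (x - N) (show 0 < d by omega)
    omega
  · have h := Nat.div_add_mod (x - N) d
    omega

def Window (d N : ℕ) (T : Set Bicyclic) : Set Bicyclic :=
  {t | t ∈ T ∧ t.1 < N + 2 * d ∧ t.2 < N + 2 * d}

lemma window_finite (d N : ℕ) (T : Set Bicyclic) : (Window d N T).Finite := by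
  have : Window d N T ⊆ (Set.Iio (N + 2*d) ×ˢ Set.Iio (N + 2*d) : Set (ℕ × ℕ)) := by
    intro t ht
    exact Set.mem_prod.mpr ⟨ht.2.1, ht.2.2⟩
  exact Set.Finite.subset ((Set.finite_Iio _).prod (Set.finite_Iio _)) this

lemma window_gen {T : Set Bicyclic} (hsub : IsInvSub T) {d N : ℕ} (hd : 1 ≤ d)
    (hreg : Reg d N T) : ∀ t ∈ T, InvGen (Window d N T) t := by
  set G := Window d N T with hG
  -- P1 : powers of the base-window generator
  have P1 : ∀ x₀, N ≤ x₀ → x₀ < N + d → bk x₀ (x₀ + d) ∈ T →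
      ∀ k, InvGen G (bk x₀ (x₀ + k * d)) := by
    intro x₀ h1 h2 hg k
    have hgG : bk x₀ (x₀ + d) ∈ G := ⟨hg, by simp [bk]; omega, by simp [bk]; omega⟩
    induction k with
    | zero =>
      have e : bk x₀ (x₀ + d) * bk (x₀ + d) x₀ = bk x₀ (x₀ + 0 * d) := by
        rw [bk_comp]; exact bk_ext rfl (by omega)
      rw [← e]
      exact InvGen.mul (.base hgG) (by rw [← bk_inv]; exact .inv (.base hgG))
    | succ k ih =>
      have e : bk x₀ (x₀ + k * d) * bk x₀ (x₀ + d) = bk x₀ (x₀ + (k+1) * d) := by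
        rw [bk_pow (by omega)]; exact bk_ext rfl (by ring)
      rw [← e]
      exact InvGen.mul ih (.base hgG)
  -- diagonal membership
  have hdiag : ∀ x y, bk x y ∈ T → bk x x ∈ T ∧ bk y y ∈ T := by
    intro x y h
    have hinv : bk y x ∈ T := by have := hsub.2 _ h; rwa [bk_inv] at this
    constructor
    · have := hsub.1 _ h _ hinv; rwa [bk_comp] at this
    · have := hsub.1 _ hinv _ h; rwa [bk_comp] at this
  -- column tail generation: x small, y ≥ N + d
  have colgen : ∀ x y, bk x y ∈ T → N + d ≤ y → x < N + 2 * d → InvGen G (bk x y) := by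
    intro x y hxy hy hx
    obtain ⟨y₀, l, hsum, hN₀, hlt₀, hdvd⟩ := resid hd (show N ≤ y by omega)
    have hyy : bk y y ∈ T := (hdiag _ _ hxy).2
    have hy₀y : bk y₀ y ∈ T := (hreg.shift1 y hN₀ (by omega) hdvd).mp hyy
    obtain ⟨m, rfl⟩ : ∃ m, l = m + 1 := by
      rcases Nat.eq_zero_or_pos l with h0 | h1
      · subst h0; simp at hsum; omega
      · exact ⟨l - 1, by omega⟩
    have hmd : (m + 1) * d = m * d + d := by ring
    have hcm : d * m = m * d := mul_comm d m
    have hg : bk y₀ (y₀ + d) ∈ T := by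
      refine (hreg.shift2 y₀ (by omega) (by omega) ?_).mp hy₀y
      exact ⟨m, by omega⟩
    have hxy₀ : bk x y₀ ∈ T := by
      refine (hreg.shift2 x hN₀ (by omega) hdvd).mp hxy
    have hxy₀G : bk x y₀ ∈ G := ⟨hxy₀, by simp [bk]; omega, by simp [bk]; omega⟩
    have e : bk x y₀ * bk y₀ (y₀ + (m + 1) * d) = bk x y := by
      rw [show y₀ + (m + 1) * d = y from by omega, bk_comp]
    rw [← e]
    exact InvGen.mul (.base hxy₀G) (P1 y₀ hN₀ hlt₀ hg (m + 1))
  -- main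
  intro t ht
  obtain ⟨x, y, rfl⟩ : ∃ x y, t = bk x y := ⟨t.1, t.2, (bk_eta t).symm⟩
  by_cases hx2 : x < N + 2 * d
  · by_cases hy2 : y < N + 2 * d
    · exact .base ⟨ht, by simp [bk]; omega, by simp [bk]; omega⟩
    · exact colgen x y ht (by omega) hx2
  · have hyx : bk y x ∈ T := by have := hsub.2 _ ht; rwa [bk_inv] at this
    by_cases hy2 : y < N + 2 * d
    · have : InvGen G (bk y x) := colgen y x hyx (by omega) hy2
      have e : (bk y x : Bicyclic)⁻¹ = bk x y := bk_inv ..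
      rw [← e]
      exact .inv this
    · -- both coordinates large
      obtain ⟨x₀, k, hsum, hN₀, hlt₀, hdvd⟩ := resid hd (show N ≤ x by omega)
      have hxx : bk x x ∈ T := (hdiag _ _ ht).1
      have hx₀x : bk x₀ x ∈ T := (hreg.shift1 x hN₀ (by omega) hdvd).mp hxx
      obtain ⟨m, rfl⟩ : ∃ m, k = m + 1 := by
        rcases Nat.eq_zero_or_pos k with h0 | h1
        · subst h0; simp at hsum; omega
        · exact ⟨k - 1, by omega⟩
      have hmd : (m + 1) * d = m * d + d := by ring
      have hcm : d * m = m * d := mul_comm d m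
      have hg : bk x₀ (x₀ + d) ∈ T := by
        refine (hreg.shift2 x₀ (by omega) (by omega) ?_).mp hx₀x
        exact ⟨m, by omega⟩
      have hx₀y : bk x₀ y ∈ T := (hreg.shift1 y hN₀ (by omega) hdvd).mp ht
      have hcol : InvGen G (bk x₀ y) := colgen x₀ y hx₀y (by omega) (by omega)
      have hpow : InvGen G (bk x₀ (x₀ + (m + 1) * d)) := P1 x₀ hN₀ hlt₀ hg (m + 1)
      have hup : InvGen G (bk x x₀) := by
        have e : (bk x₀ (x₀ + (m + 1) * d) : Bicyclic)⁻¹ = bk x x₀ := by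
          rw [bk_inv]; exact bk_ext (by omega) rfl
        rw [← e]; exact .inv hpow
      have e : bk x x₀ * bk x₀ y = bk x y := bk_comp ..
      rw [← e]
      exact .mul hup hcol

lemma bk_one_mul (t : Bicyclic) : bk 0 0 * t = t := by
  obtain ⟨x, y, rfl⟩ : ∃ x y, t = bk x y := ⟨t.1, t.2, (bk_eta t).symm⟩
  rw [bk_mul]; exact bk_ext (by omega) (by omega)

lemma bk_mul_one (t : Bicyclic) : t * bk 0 0 = t := by
  obtain ⟨x, y, rfl⟩ : ∃ x y, t = bk x y := ⟨t.1, t.2, (bk_eta t).symm⟩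
  rw [bk_mul]; exact bk_ext (by omega) (by omega)

section Slayer

variable {S : Type*} [InverseSemigroup S] {B : Set S}
  {φ : Bicyclic → S}

lemma inv_mem_B (hideal : ∀ s : S, ∀ b ∈ B, s * b ∈ B ∧ b * s ∈ B)
    {b : S} (hb : b ∈ B) : b⁻¹ ∈ B := by
  have h1 : b⁻¹ * b ∈ B := (hideal b⁻¹ b hb).1
  have h2 : (b⁻¹ * b) * b⁻¹ ∈ B := (hideal b⁻¹ _ h1).2
  have e : b⁻¹ * b * b⁻¹ = b⁻¹ := by
    have := InverseSemigroup.mul_inv_mul (b⁻¹)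
    rwa [InverseSemigroup.inv_invol] at this
  rwa [e] at h2

lemma inv_not_mem_B (hideal : ∀ s : S, ∀ b ∈ B, s * b ∈ B ∧ b * s ∈ B)
    {a : S} (ha : a ∉ B) : a⁻¹ ∉ B := by
  intro h
  exact ha (by
    have := inv_mem_B hideal h
    rwa [InverseSemigroup.inv_invol] at this)

lemma left_trans (hideal : ∀ s : S, ∀ b ∈ B, s * b ∈ B ∧ b * s ∈ B)
    (hrange : Set.range φ = B) (hmul : ∀ a b : Bicyclic, φ (a * b) = φ a * φ b)
    (a : S) (t : Bicyclic) :
    ∃ u : Bicyclic, φ u = a * φ (bk 0 0) ∧ a * φ t = φ (u * t) := by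
  have hB0 : φ (bk 0 0) ∈ B := hrange ▸ Set.mem_range_self _
  have hmem : a * φ (bk 0 0) ∈ Set.range φ := by
    rw [hrange]; exact (hideal a _ hB0).1
  obtain ⟨u, hu⟩ := hmem
  refine ⟨u, hu, ?_⟩
  have h0 : φ (bk 0 0) * φ t = φ t := by rw [← hmul, bk_one_mul]
  calc a * φ t = a * (φ (bk 0 0) * φ t) := by rw [h0]
    _ = (a * φ (bk 0 0)) * φ t := (mul_assoc ..).symm
    _ = φ u * φ t := by rw [hu]
    _ = φ (u * t) := (hmul ..).symm

lemma right_trans (hideal : ∀ s : S, ∀ b ∈ B, s * b ∈ B ∧ b * s ∈ B)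
    (hrange : Set.range φ = B) (hmul : ∀ a b : Bicyclic, φ (a * b) = φ a * φ b)
    (a : S) (t : Bicyclic) :
    ∃ u : Bicyclic, φ u = φ (bk 0 0) * a ∧ φ t * a = φ (t * u) := by
  have hB0 : φ (bk 0 0) ∈ B := hrange ▸ Set.mem_range_self _
  have hmem : φ (bk 0 0) * a ∈ Set.range φ := by
    rw [hrange]; exact (hideal a _ hB0).2
  obtain ⟨u, hu⟩ := hmem
  refine ⟨u, hu, ?_⟩
  have h0 : φ t * φ (bk 0 0) = φ t := by rw [← hmul, bk_mul_one]
  calc φ t * a = (φ t * φ (bk 0 0)) * a := by rw [h0]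
    _ = φ t * (φ (bk 0 0) * a) := mul_assoc ..
    _ = φ t * φ u := by rw [hu]
    _ = φ (t * u) := (hmul ..).symm

end Slayer

section DiagBounded

variable {S : Type*} [InverseSemigroup S] {B : Set S} {φ : Bicyclic → S}

lemma diag_bounded
    (hideal : ∀ s : S, ∀ b ∈ B, s * b ∈ B ∧ b * s ∈ B)
    (hfin : (Bᶜ : Set S).Finite)
    (hinj : Function.Injective φ) (hrange : Set.range φ = B)
    (hmul : ∀ a b : Bicyclic, φ (a * b) = φ a * φ b)
    (hinv : ∀ a : Bicyclic, φ a⁻¹ = (φ a)⁻¹)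
    (X : Finset S)
    (hdiag : ∀ t : Bicyclic, InvGen (↑X : Set S) (φ t) → t.1 = t.2) :
    ∃ M : ℕ, ∀ t : Bicyclic, InvGen (↑X : Set S) (φ t) → t.1 ≤ M ∧ t.2 ≤ M := by
  classical
  set KS : Set S := (↑X : Set S) ∪ Set.image2 (· * ·) Bᶜ Bᶜ ∪
      (fun a => a * φ (bk 0 0)) '' Bᶜ ∪ (fun a => φ (bk 0 0) * a) '' Bᶜ with hKS
  have hKSfin : KS.Finite := by
    refine (((X.finite_toSet.union ?_).union ?_).union ?_)
    · exact Set.Finite.image2 _ hfin hfin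
    · exact hfin.image _
    · exact hfin.image _
  have hKfin : (φ ⁻¹' KS).Finite := hKSfin.preimage (Set.injOn_of_injective hinj)
  set M : ℕ := hKfin.toFinset.sup (fun t => max t.1 t.2) with hM
  have hKbound : ∀ t : Bicyclic, φ t ∈ KS → t.1 ≤ M ∧ t.2 ≤ M := by
    intro t ht
    have h := Finset.le_sup (f := fun t : Bicyclic => max t.1 t.2)
      (hKfin.mem_toFinset.mpr ht)
    exact ⟨le_trans (le_max_left _ _) h, le_trans (le_max_right _ _) h⟩
  refine ⟨M, ?_⟩
  have key : ∀ u : S, InvGen (↑X : Set S) u →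
      (u ∉ B ∨ ∃ t : Bicyclic, φ t = u ∧ t.1 ≤ M ∧ t.2 ≤ M) := by
    intro u hu
    induction hu with
    | base hx =>
      rename_i x
      by_cases hxB : x ∈ B
      · right
        obtain ⟨t, rfl⟩ : x ∈ Set.range φ := hrange.symm ▸ hxB
        exact ⟨t, rfl, hKbound t (by left; left; left; exact hx)⟩
      · exact Or.inl hxB
    | mul ha hb iha ihb =>
      rename_i a b
      rcases iha with haB | ⟨ta, rfl, ha1, ha2⟩
      · rcases ihb with hbB | ⟨tb, rfl, hb1, hb2⟩
        · -- both outside B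
          by_cases hab : a * b ∈ B
          · right
            obtain ⟨t, ht⟩ : a * b ∈ Set.range φ := hrange.symm ▸ hab
            refine ⟨t, ht, hKbound t ?_⟩
            left; left; right
            exact ⟨a, haB, b, hbB, ht.symm⟩
          · exact Or.inl hab
        · -- a ∉ B, b = φ tb
          right
          obtain ⟨u', hu'1, hu'2⟩ := left_trans hideal hrange hmul a tb
          have hu'K : u'.1 ≤ M ∧ u'.2 ≤ M := by
            refine hKbound u' ?_
            left; right
            exact ⟨a, haB, hu'1.symm⟩
          have htb : tb.1 = tb.2 := hdiag tb hb
          have hprod : (u' * tb).1 = (u' * tb).2 := by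
            refine hdiag _ ?_
            rw [← hu'2]
            exact InvGen.mul ha hb
          refine ⟨u' * tb, hu'2.symm, ?_⟩
          -- arithmetic
          obtain ⟨p, q, hpq⟩ : ∃ p q, u' = bk p q := ⟨u'.1, u'.2, (bk_eta u').symm⟩
          obtain ⟨n, m, hnm⟩ : ∃ n m, tb = bk n m := ⟨tb.1, tb.2, (bk_eta tb).symm⟩
          subst hpq; subst hnm
          simp only [bk] at htb hb1 hb2 hu'K ⊢
          rw [bk_mul] at hprod ⊢
          simp only [bk] at hprod ⊢
          omega
      · rcases ihb with hbB | ⟨tb, rfl, hb1, hb2⟩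
        · -- a = φ ta, b ∉ B
          right
          obtain ⟨u', hu'1, hu'2⟩ := right_trans hideal hrange hmul b ta
          have hu'K : u'.1 ≤ M ∧ u'.2 ≤ M := by
            refine hKbound u' ?_
            right
            exact ⟨b, hbB, hu'1.symm⟩
          have hta : ta.1 = ta.2 := hdiag ta ha
          have hprod : (ta * u').1 = (ta * u').2 := by
            refine hdiag _ ?_
            rw [← hu'2]
            exact InvGen.mul ha hb
          refine ⟨ta * u', hu'2.symm, ?_⟩
          obtain ⟨p, q, hpq⟩ : ∃ p q, u' = bk p q := ⟨u'.1, u'.2, (bk_eta u').symm⟩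
          obtain ⟨n, m, hnm⟩ : ∃ n m, ta = bk n m := ⟨ta.1, ta.2, (bk_eta ta).symm⟩
          subst hpq; subst hnm
          simp only [bk] at hta ha1 ha2 hu'K ⊢
          rw [bk_mul] at hprod ⊢
          simp only [bk] at hprod ⊢
          omega
        · -- both images
          right
          refine ⟨ta * tb, hmul ta tb, ?_⟩
          have hta : ta.1 = ta.2 := hdiag ta ha
          have htb : tb.1 = tb.2 := hdiag tb hb
          obtain ⟨p, q, hpq⟩ : ∃ p q, ta = bk p q := ⟨ta.1, ta.2, (bk_eta ta).symm⟩
          obtain ⟨n, m, hnm⟩ : ∃ n m, tb = bk n m := ⟨tb.1, tb.2, (bk_eta tb).symm⟩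
          subst hpq; subst hnm
          simp only [bk] at hta htb ha1 ha2 hb1 hb2 ⊢
          rw [bk_mul]
          simp only [bk]
          omega
    | inv ha iha =>
      rename_i a
      rcases iha with haB | ⟨ta, rfl, ha1, ha2⟩
      · exact Or.inl (inv_not_mem_B hideal haB)
      · right
        refine ⟨ta⁻¹, hinv ta, ?_⟩
        obtain ⟨p, q, hpq⟩ : ∃ p q, ta = bk p q := ⟨ta.1, ta.2, (bk_eta ta).symm⟩
        subst hpq
        simp only [bk] at ha1 ha2 ⊢
        rw [bk_inv]
        simp only [bk]
        omega
  intro t ht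
  rcases key (φ t) ht with hnB | ⟨t', ht', h1, h2⟩
  · exact absurd (hrange ▸ Set.mem_range_self t) hnB
  · have : t' = t := hinj ht'
    subst this
    exact ⟨h1, h2⟩

end DiagBounded


section TraceReg

variable {S : Type*} [InverseSemigroup S] {B : Set S} {φ : Bicyclic → S}

lemma preimage_invsub
    (hmul : ∀ a b : Bicyclic, φ (a * b) = φ a * φ b)
    (hinv : ∀ a : Bicyclic, φ a⁻¹ = (φ a)⁻¹)
    {U : Set S} (hU : IsInvSub U) : IsInvSub (φ ⁻¹' U) := by
  constructor
  · intro t₁ h1 t₂ h2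
    simp only [Set.mem_preimage] at *
    rw [hmul]; exact hU.1 _ h1 _ h2
  · intro t h
    simp only [Set.mem_preimage] at *
    rw [hinv]; exact hU.2 _ h

lemma trace_reg
    (hideal : ∀ s : S, ∀ b ∈ B, s * b ∈ B ∧ b * s ∈ B)
    (hfin : (Bᶜ : Set S).Finite)
    (hinj : Function.Injective φ) (hrange : Set.range φ = B)
    (hmul : ∀ a b : Bicyclic, φ (a * b) = φ a * φ b)
    (hinv : ∀ a : Bicyclic, φ a⁻¹ = (φ a)⁻¹)
    {U : Set S} (hfg : InvFG U) :
    ∃ d N, 1 ≤ d ∧ Reg d N (φ ⁻¹' U) := by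
  obtain ⟨X, hXsub, hXeq⟩ := hfg
  have hU : IsInvSub U := by
    constructor
    · intro a ha b hb
      rw [hXeq] at *; exact InvGen.mul ha hb
    · intro a ha
      rw [hXeq] at *; exact InvGen.inv ha
  have hTsub : IsInvSub (φ ⁻¹' U) := preimage_invsub hmul hinv hU
  by_cases hne : ∃ t : Bicyclic, t ∈ φ ⁻¹' U ∧ t.1 ≠ t.2
  · obtain ⟨t, htT, htne⟩ := hne
    have hmem : bk t.1 t.2 ∈ φ ⁻¹' U := by rw [bk_eta]; exact htT
    rcases Nat.lt_or_ge t.1 t.2 with h | h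
    · exact ⟨t.2 - t.1, t.1, by omega, reg_of_nonidem hTsub hmem h⟩
    · have h' : t.2 < t.1 := by omega
      have hmem' : bk t.2 t.1 ∈ φ ⁻¹' U := by
        have := hTsub.2 _ hmem; rwa [bk_inv] at this
      exact ⟨t.1 - t.2, t.2, by omega, reg_of_nonidem hTsub hmem' h'⟩
  · push_neg at hne
    have hdiag : ∀ t : Bicyclic, InvGen (↑X : Set S) (φ t) → t.1 = t.2 := by
      intro t ht
      exact hne t (by rw [Set.mem_preimage, hXeq]; exact ht)
    obtain ⟨M, hM⟩ := diag_bounded hideal hfin hinj hrange hmul hinv X hdiag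
    have hfinT : (φ ⁻¹' U).Finite := by
      refine Set.Finite.subset ((Set.finite_Iic M).prod (Set.finite_Iic M)) ?_
      intro t ht
      have hIG : InvGen (↑X : Set S) (φ t) := by
        have this : φ t ∈ U := ht; rwa [hXeq] at this
      have := hM t hIG
      exact Set.mem_prod.mpr ⟨Set.mem_Iic.mpr this.1, Set.mem_Iic.mpr this.2⟩
    exact reg_of_finite hfinT

lemma transfer_gen
    (hmul : ∀ a b : Bicyclic, φ (a * b) = φ a * φ b)
    (hinv : ∀ a : Bicyclic, φ a⁻¹ = (φ a)⁻¹)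
    {G : Set Bicyclic} {Y : Set S} (hsub : ∀ t ∈ G, φ t ∈ Y) :
    ∀ t, InvGen G t → InvGen Y (φ t) := by
  intro t h
  induction h with
  | base hx => exact .base (hsub _ hx)
  | mul ha hb iha ihb => rw [hmul]; exact .mul iha ihb
  | inv ha iha => rw [hinv]; exact .inv iha

end TraceReg

theorem stmt_14 {S : Type*} [InverseSemigroup S] (B : Set S)
    (hideal : ∀ s : S, ∀ b ∈ B, s * b ∈ B ∧ b * s ∈ B)
    (hfin : (Bᶜ : Set S).Finite)
    (φ : Bicyclic → S) (hinj : Function.Injective φ) (hrange : Set.range φ = B)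
    (hmul : ∀ a b : Bicyclic, φ (a * b) = φ a * φ b)
    (hinv : ∀ a : Bicyclic, φ a⁻¹ = (φ a)⁻¹) :
    Howson S := by
  classical
  intro U V hU hV hfgU hfgV
  obtain ⟨dU, NU, hdU, hRU⟩ := trace_reg hideal hfin hinj hrange hmul hinv hfgU
  obtain ⟨dV, NV, hdV, hRV⟩ := trace_reg hideal hfin hinj hrange hmul hinv hfgV
  set D := dU * dV with hD
  set N := max NU NV with hN
  have hD1 : 1 ≤ D := Nat.mul_pos hdU hdV
  have hRU' : Reg D N (φ ⁻¹' U) := by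
    have := (hRU.mul_period dV).mono (le_max_left NU NV)
    rwa [mul_comm dV dU] at this
  have hRV' : Reg D N (φ ⁻¹' V) := (hRV.mul_period dU).mono (le_max_right NU NV)
  have hRW : Reg D N (φ ⁻¹' (U ∩ V)) := by
    rw [Set.preimage_inter]; exact hRU'.inter hRV'
  have hWsub : IsInvSub (U ∩ V) :=
    ⟨fun a ha b hb => ⟨hU.1 a ha.1 b hb.1, hV.1 a ha.2 b hb.2⟩,
     fun a ha => ⟨hU.2 a ha.1, hV.2 a ha.2⟩⟩
  have hTWsub : IsInvSub (φ ⁻¹' (U ∩ V)) := preimage_invsub hmul hinv hWsub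
  have hgen := window_gen hTWsub hD1 hRW
  have hGfin := window_finite D N (φ ⁻¹' (U ∩ V))
  have hFfin : ((U ∩ V) \ B).Finite := hfin.subset (fun s hs => hs.2)
  set XW : Finset S := (hGfin.image φ).toFinset ∪ hFfin.toFinset with hXW
  have hXWmem : ∀ s, s ∈ XW ↔
      (s ∈ φ '' (Window D N (φ ⁻¹' (U ∩ V))) ∨ s ∈ (U ∩ V) \ B) := by
    intro s
    simp [hXW, Finset.mem_union, Set.Finite.mem_toFinset]
  have hXWsub : (↑XW : Set S) ⊆ U ∩ V := by
    intro s hs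
    rcases (hXWmem s).mp hs with ⟨t, ht, rfl⟩ | hs2
    · exact ht.1
    · exact hs2.1
  refine ⟨XW, hXWsub, ?_⟩
  ext s
  simp only [Set.mem_setOf_eq]
  constructor
  · intro hsUV
    by_cases hsB : s ∈ B
    · obtain ⟨t, rfl⟩ : s ∈ Set.range φ := hrange.symm ▸ hsB
      have htW : t ∈ φ ⁻¹' (U ∩ V) := hsUV
      exact transfer_gen hmul hinv
        (fun t' ht' => (hXWmem _).mpr (Or.inl ⟨t', ht', rfl⟩)) t (hgen t htW)
    · exact .base ((hXWmem s).mpr (Or.inr ⟨hsUV, hsB⟩))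
  · intro h
    induction h with
    | base hx => exact hXWsub hx
    | mul ha hb iha ihb => exact hWsub.1 _ iha _ ihb
    | inv ha iha => exact hWsub.2 _ iha
end

section
/- An inverse semigroup with finitely many idempotents whose maximal subgroups are all locally finite has the Howson property. -/
namespace ISG

variable {S : Type*} [InverseSemigroup S]

lemma mim (a : S) : a * a⁻¹ * a = a := InverseSemigroup.mul_inv_mul a
lemma ii (a : S) : a⁻¹⁻¹ = a := InverseSemigroup.inv_invol a
lemma imi (a : S) : a⁻¹ * a * a⁻¹ = a⁻¹ := by
  have := mim a⁻¹; rwa [ii] at this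
lemma ec (a b : S) : (a * a⁻¹) * (b * b⁻¹) = (b * b⁻¹) * (a * a⁻¹) :=
  InverseSemigroup.idem_comm a b

lemma ridem (s : S) : (s * s⁻¹) * (s * s⁻¹) = s * s⁻¹ := by
  calc (s * s⁻¹) * (s * s⁻¹) = (s * s⁻¹ * s) * s⁻¹ := by simp only [mul_assoc]
    _ = s * s⁻¹ := by rw [mim]

lemma didem (s : S) : (s⁻¹ * s) * (s⁻¹ * s) = s⁻¹ * s := by
  calc (s⁻¹ * s) * (s⁻¹ * s) = (s⁻¹ * s * s⁻¹) * s := by simp only [mul_assoc]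
    _ = s⁻¹ * s := by rw [imi]

lemma inv_idem {e : S} (he : e * e = e) : e⁻¹ = e := by
  have h1 : e * e⁻¹ * e = e := mim e
  have h2 : e⁻¹ * e * e⁻¹ = e⁻¹ := imi e
  have hc : (e * e⁻¹) * (e⁻¹ * e) = (e⁻¹ * e) * (e * e⁻¹) := by
    have := ec e e⁻¹; rwa [ii] at this
  have kh : (e⁻¹ * e) * (e * e⁻¹) = e⁻¹ := by
    calc (e⁻¹ * e) * (e * e⁻¹) = e⁻¹ * (e * e) * e⁻¹ := by simp only [mul_assoc]
      _ = e⁻¹ * e * e⁻¹ := by rw [he]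
      _ = e⁻¹ := h2
  have hk : (e * e⁻¹) * (e⁻¹ * e) = e⁻¹ := hc.trans kh
  have hh : (e * e⁻¹) * (e * e⁻¹) = e * e⁻¹ := ridem e
  have kk : (e⁻¹ * e) * (e⁻¹ * e) = e⁻¹ * e := didem e
  -- g*k = g  where g = e⁻¹, h = e*e⁻¹, k = e⁻¹*e
  have gk : e⁻¹ * (e⁻¹ * e) = e⁻¹ := by
    calc e⁻¹ * (e⁻¹ * e) = ((e * e⁻¹) * (e⁻¹ * e)) * (e⁻¹ * e) := by rw [hk]
      _ = (e * e⁻¹) * ((e⁻¹ * e) * (e⁻¹ * e)) := by simp only [mul_assoc]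
      _ = (e * e⁻¹) * (e⁻¹ * e) := by rw [kk]
      _ = e⁻¹ := hk
  have kg : (e⁻¹ * e) * e⁻¹ = e⁻¹ := by
    calc (e⁻¹ * e) * e⁻¹ = (e⁻¹ * e) * ((e⁻¹ * e) * (e * e⁻¹)) := by rw [kh]
      _ = ((e⁻¹ * e) * (e⁻¹ * e)) * (e * e⁻¹) := by simp only [mul_assoc]
      _ = (e⁻¹ * e) * (e * e⁻¹) := by rw [kk]
      _ = e⁻¹ := kh
  have hg : (e * e⁻¹) * e⁻¹ = e⁻¹ := by
    calc (e * e⁻¹) * e⁻¹ = (e * e⁻¹) * ((e * e⁻¹) * (e⁻¹ * e)) := by rw [hk]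
      _ = ((e * e⁻¹) * (e * e⁻¹)) * (e⁻¹ * e) := by simp only [mul_assoc]
      _ = (e * e⁻¹) * (e⁻¹ * e) := by rw [hh]
      _ = e⁻¹ := hk
  have gg : e⁻¹ * e⁻¹ = e⁻¹ := by
    calc e⁻¹ * e⁻¹ = ((e * e⁻¹) * (e⁻¹ * e)) * e⁻¹ := by rw [hk]
      _ = (e * e⁻¹) * ((e⁻¹ * e) * e⁻¹) := by simp only [mul_assoc]
      _ = (e * e⁻¹) * e⁻¹ := by rw [kg]
      _ = e⁻¹ := hg
  calc e⁻¹ = (e * e⁻¹) * (e⁻¹ * e) := hk.symm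
    _ = e * (e⁻¹ * e⁻¹) * e := by simp only [mul_assoc]
    _ = e * e⁻¹ * e := by rw [gg]
    _ = e := h1

lemma idem_comm' {e f : S} (he : e * e = e) (hf : f * f = f) : e * f = f * e := by
  have := ec e f
  rwa [inv_idem he, inv_idem hf, he, hf] at this

lemma inv_unique {x z : S} (h1 : x * z * x = x) (h2 : z * x * z = z) : z = x⁻¹ := by
  have hxz : (x * z) * (x * z) = x * z := by
    calc (x * z) * (x * z) = (x * z * x) * z := by simp only [mul_assoc]
      _ = x * z := by rw [h1]
  have hzx : (z * x) * (z * x) = z * x := by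
    calc (z * x) * (z * x) = (z * x * z) * x := by simp only [mul_assoc]
      _ = z * x := by rw [h2]
  have c1 : (x⁻¹ * x) * (z * x) = (z * x) * (x⁻¹ * x) := idem_comm' (didem x) hzx
  have c2 : (x * x⁻¹) * (x * z) = (x * z) * (x * x⁻¹) := idem_comm' (ridem x) hxz
  have e1 : x⁻¹ = z * x * x⁻¹ := by
    calc x⁻¹ = x⁻¹ * x * x⁻¹ := (imi x).symm
      _ = x⁻¹ * (x * z * x) * x⁻¹ := by rw [h1]
      _ = ((x⁻¹ * x) * (z * x)) * x⁻¹ := by simp only [mul_assoc]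
      _ = ((z * x) * (x⁻¹ * x)) * x⁻¹ := by rw [c1]
      _ = z * x * (x⁻¹ * x * x⁻¹) := by simp only [mul_assoc]
      _ = z * x * x⁻¹ := by rw [imi]
  have e2 : z = z * x * x⁻¹ := by
    calc z = z * x * z := h2.symm
      _ = z * (x * x⁻¹ * x) * z := by rw [mim]
      _ = z * ((x * x⁻¹) * (x * z)) := by simp only [mul_assoc]
      _ = z * ((x * z) * (x * x⁻¹)) := by rw [c2]
      _ = (z * x * z) * (x * x⁻¹) := by simp only [mul_assoc]
      _ = z * (x * x⁻¹) := by rw [h2]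
      _ = z * x * x⁻¹ := by rw [mul_assoc]
  exact e2.trans e1.symm

lemma inv_rev (a b : S) : (a * b)⁻¹ = b⁻¹ * a⁻¹ := by
  have c : (b * b⁻¹) * (a⁻¹ * a) = (a⁻¹ * a) * (b * b⁻¹) := idem_comm' (ridem b) (didem a)
  have h1 : (a * b) * (b⁻¹ * a⁻¹) * (a * b) = a * b := by
    calc (a * b) * (b⁻¹ * a⁻¹) * (a * b) = a * ((b * b⁻¹) * (a⁻¹ * a)) * b := by
          simp only [mul_assoc]
      _ = a * ((a⁻¹ * a) * (b * b⁻¹)) * b := by rw [c]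
      _ = (a * a⁻¹ * a) * (b * b⁻¹ * b) := by simp only [mul_assoc]
      _ = a * b := by rw [mim, mim]
  have h2 : (b⁻¹ * a⁻¹) * (a * b) * (b⁻¹ * a⁻¹) = b⁻¹ * a⁻¹ := by
    calc (b⁻¹ * a⁻¹) * (a * b) * (b⁻¹ * a⁻¹)
        = b⁻¹ * ((a⁻¹ * a) * (b * b⁻¹)) * a⁻¹ := by simp only [mul_assoc]
      _ = b⁻¹ * ((b * b⁻¹) * (a⁻¹ * a)) * a⁻¹ := by rw [← c]
      _ = (b⁻¹ * b * b⁻¹) * (a⁻¹ * a * a⁻¹) := by simp only [mul_assoc]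
      _ = b⁻¹ * a⁻¹ := by rw [imi, imi]
  exact (inv_unique h1 h2).symm

lemma rconj (g w : S) : (g * w) * (g * w)⁻¹ = g * (w * w⁻¹) * g⁻¹ := by
  rw [inv_rev]; simp only [mul_assoc]

lemma dconj (g w : S) : (g * w)⁻¹ * (g * w) = w⁻¹ * (g⁻¹ * g) * w := by
  rw [inv_rev]; simp only [mul_assoc]

lemma mul_d {s f : S} (h : s⁻¹ * s = f) : s * f = s := by
  rw [← h, ← mul_assoc, mim]

lemma r_mul {s e : S} (h : s * s⁻¹ = e) : e * s = s := by
  rw [← h]; exact mim s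

lemma inv_r {s e : S} (h : s * s⁻¹ = e) : s⁻¹ * e = s⁻¹ :=
  mul_d (by rw [ii]; exact h)

lemma d_inv {s f : S} (h : s⁻¹ * s = f) : f * s⁻¹ = s⁻¹ :=
  r_mul (by rw [ii]; exact h)

lemma Lr (w t : S) : (w * w⁻¹) * ((w * t) * (w * t)⁻¹) = (w * t) * (w * t)⁻¹ := by
  calc (w * w⁻¹) * ((w * t) * (w * t)⁻¹) = (w * w⁻¹ * w) * (t * (w * t)⁻¹) := by
        simp only [mul_assoc]
    _ = w * (t * (w * t)⁻¹) := by rw [mim]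
    _ = (w * t) * (w * t)⁻¹ := by rw [← mul_assoc]

end ISG
inductive NGen {S : Type*} [Mul S] (Y : Set S) : S → Prop
  | base {x : S} : x ∈ Y → NGen Y x
  | mul {a b : S} : NGen Y a → NGen Y b → NGen Y (a * b)

namespace ISG

variable {S : Type*} [InverseSemigroup S]

lemma nGen_inv {Y : Set S} (hY : ∀ y ∈ Y, y⁻¹ ∈ Y) {s : S} (h : NGen Y s) :
    NGen Y s⁻¹ := by
  induction h with
  | base hx => exact .base (hY _ hx)
  | mul _ _ iha ihb => rw [inv_rev]; exact .mul ihb iha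

lemma invGen_to_nGen {X : Set S} {s : S} (h : InvGen X s) :
    NGen (X ∪ (fun x => x⁻¹) '' X) s := by
  induction h with
  | base hx => exact .base (Or.inl hx)
  | mul _ _ iha ihb => exact .mul iha ihb
  | inv _ ih =>
      refine nGen_inv ?_ ih
      rintro y (hy | ⟨x, hx, rfl⟩)
      · exact Or.inr ⟨y, hy, rfl⟩
      · exact Or.inl (by rwa [ii])

lemma invGen_mem {T : Set S} (hT : IsInvSub T) {s : S} (h : InvGen T s) : s ∈ T := by
  induction h with
  | base hx => exact hx
  | mul _ _ iha ihb => exact hT.1 _ iha _ ihb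
  | inv _ ih => exact hT.2 _ ih

lemma invFG_of_finite {T : Set S} (hf : T.Finite) (hT : IsInvSub T) : InvFG T := by
  refine ⟨hf.toFinset, ?_, ?_⟩
  · rw [Set.Finite.coe_toFinset]
  · have hc : (↑hf.toFinset : Set S) = T := Set.Finite.coe_toFinset _
    rw [hc]
    ext s
    exact ⟨fun hs => .base hs, fun hs => invGen_mem hT hs⟩

def Qset (U : Set S) (e f : S) : Set S :=
  {s | s ∈ U ∧ s * s⁻¹ = e ∧ s⁻¹ * s = f}

open Classical in
noncomputable def rep (U : Set S) (e f : S) : S :=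
  if f = e then e else if h : (Qset U e f).Nonempty then h.some else e

lemma rep_e (U : Set S) (e : S) : rep U e e = e := by
  simp [rep]

lemma e_mem_Q {U : Set S} {e : S} (he : e * e = e) (heU : e ∈ U) : e ∈ Qset U e e := by
  refine ⟨heU, ?_, ?_⟩ <;> rw [inv_idem he, he]

lemma rep_mem {U : Set S} {e : S} (he : e * e = e) (heU : e ∈ U) (f : S)
    (hne : (Qset U e f).Nonempty) : rep U e f ∈ Qset U e f := by
  unfold rep
  split_ifs with h1
  · subst h1; exact e_mem_Q he heU
  · exact hne.some_mem

def GSet (U Y : Set S) (e : S) : Set S :=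
  {w | w ∈ Qset U e e ∧ ∃ f y f', (Qset U e f).Nonempty ∧ y ∈ Y ∧
    (Qset U e f').Nonempty ∧ w = rep U e f * y * (rep U e f')⁻¹}

end ISG
namespace ISG

variable {S : Type*} [InverseSemigroup S]

lemma main
    (hE : {e : S | e * e = e}.Finite)
    (hlf : ∀ e : S, e * e = e →
      ∀ U : Set S, U ⊆ {s : S | s * s⁻¹ = e ∧ s⁻¹ * s = e} →
        IsInvSub U → InvFG U → U.Finite)
    {U Y : Set S} (hU : IsInvSub U) (hYfin : Y.Finite) (hYU : Y ⊆ U)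
    (hgen : ∀ u ∈ U, NGen Y u)
    {e : S} (he : e * e = e) (heU : e ∈ U) : (Qset U e e).Finite := by
  have hmem' : ∀ s, NGen Y s → s ∈ U := by
    intro s h
    induction h with
    | base h => exact hYU h
    | mul _ _ ih1 ih2 => exact hU.1 _ ih1 _ ih2
  have phiK : ∀ {q f : S}, q ∈ Qset U e f → q * (rep U e f)⁻¹ ∈ Qset U e e := by
    intro q f hq
    have hA := rep_mem he heU f ⟨q, hq⟩
    obtain ⟨hqU, hqr, hqd⟩ := hq
    obtain ⟨hAU, hAr, hAd⟩ := hA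
    refine ⟨hU.1 _ hqU _ (hU.2 _ hAU), ?_, ?_⟩
    · rw [rconj, ii, hAd, mul_d hqd]; exact hqr
    · rw [dconj, ii, hqd, mul_d hAd]; exact hAr
  have phi_a : ∀ {q f : S}, q ∈ Qset U e f → q * (rep U e f)⁻¹ * rep U e f = q := by
    intro q f hq
    have hA := rep_mem he heU f ⟨q, hq⟩
    rw [mul_assoc, hA.2.2, mul_d hq.2.2]
  have L6 : ∀ {q u v : S}, q * q⁻¹ = e → ((q*u)*v)*((q*u)*v)⁻¹ = e →
      (q*u)*(q*u)⁻¹ = e := by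
    intro q u v hq h
    have h1 : e * ((q*u)*(q*u)⁻¹) = (q*u)*(q*u)⁻¹ := by rw [← hq]; exact Lr q u
    have h2 : ((q*u)*(q*u)⁻¹) * e = e := by
      have h3 := Lr (q*u) v
      rw [h] at h3
      exact h3
    calc (q*u)*(q*u)⁻¹ = e * ((q*u)*(q*u)⁻¹) := h1.symm
      _ = ((q*u)*(q*u)⁻¹) * e := idem_comm' he (ridem (q*u))
      _ = e := h2
  have Lbase_r : ∀ {q f y : S}, q ∈ Qset U e f → (q*y)*(q*y)⁻¹ = e →
      (rep U e f * y) * (rep U e f * y)⁻¹ = e := by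
    intro q f y hq hrqy
    have hA := rep_mem he heU f ⟨q, hq⟩
    have hg := phiK hq
    have hgq : q * (rep U e f)⁻¹ * rep U e f = q := phi_a hq
    have hdg : (q * (rep U e f)⁻¹)⁻¹ * (q * (rep U e f)⁻¹) = e := hg.2.2
    have s1 : e * ((rep U e f * y) * (rep U e f * y)⁻¹) =
        (rep U e f * y) * (rep U e f * y)⁻¹ := by
      calc e * ((rep U e f * y) * (rep U e f * y)⁻¹)
          = (e * rep U e f) * (y * (rep U e f * y)⁻¹) := by simp only [mul_assoc]
        _ = rep U e f * (y * (rep U e f * y)⁻¹) := by rw [r_mul hA.2.1]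
        _ = (rep U e f * y) * (rep U e f * y)⁻¹ := by rw [← mul_assoc]
    have hq_eq : q * y = (q * (rep U e f)⁻¹) * (rep U e f * y) := by
      rw [← mul_assoc, hgq]
    have s2 : (q * (rep U e f)⁻¹) * ((rep U e f * y) * (rep U e f * y)⁻¹) *
        (q * (rep U e f)⁻¹)⁻¹ = e := by
      rw [← rconj, ← hq_eq]; exact hrqy
    have expand : (q * (rep U e f)⁻¹)⁻¹ *
        ((q * (rep U e f)⁻¹) * ((rep U e f * y) * (rep U e f * y)⁻¹) *
          (q * (rep U e f)⁻¹)⁻¹) * (q * (rep U e f)⁻¹) =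
        e * ((rep U e f * y) * (rep U e f * y)⁻¹) * e := by
      calc (q * (rep U e f)⁻¹)⁻¹ *
          ((q * (rep U e f)⁻¹) * ((rep U e f * y) * (rep U e f * y)⁻¹) *
            (q * (rep U e f)⁻¹)⁻¹) * (q * (rep U e f)⁻¹)
          = ((q * (rep U e f)⁻¹)⁻¹ * (q * (rep U e f)⁻¹)) *
            ((rep U e f * y) * (rep U e f * y)⁻¹) *
            ((q * (rep U e f)⁻¹)⁻¹ * (q * (rep U e f)⁻¹)) := by simp only [mul_assoc]
        _ = e * ((rep U e f * y) * (rep U e f * y)⁻¹) * e := by rw [hdg]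
    have expand2 : (q * (rep U e f)⁻¹)⁻¹ * e * (q * (rep U e f)⁻¹) = e := by
      rw [inv_r hg.2.1, hdg]
    rw [s2] at expand
    have s3 : e * ((rep U e f * y) * (rep U e f * y)⁻¹) * e = e :=
      expand.symm.trans expand2
    have s4 : ((rep U e f * y) * (rep U e f * y)⁻¹) * e = e := by
      rw [← s1]; exact s3
    calc (rep U e f * y) * (rep U e f * y)⁻¹
        = e * ((rep U e f * y) * (rep U e f * y)⁻¹) := s1.symm
      _ = ((rep U e f * y) * (rep U e f * y)⁻¹) * e := idem_comm' he (ridem _)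
      _ = e := s4
  have dAy : ∀ {q f y : S}, q ∈ Qset U e f →
      (rep U e f * y)⁻¹ * (rep U e f * y) = (q*y)⁻¹*(q*y) := by
    intro q f y hq
    have hA := rep_mem he heU f ⟨q, hq⟩
    rw [dconj, dconj, hA.2.2, hq.2.2]
  have MI : ∀ u : S, NGen Y u → ∀ q : S, q ∈ U → q * q⁻¹ = e → (q*u)*(q*u)⁻¹ = e →
      ∃ g, InvGen (GSet U Y e) g ∧
        (q*u) * (rep U e ((q*u)⁻¹*(q*u)))⁻¹ = q * (rep U e (q⁻¹*q))⁻¹ * g := by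
    intro u hu
    induction hu with
    | @base y hy =>
      intro q hqU hqr hrqy
      have hqQ : q ∈ Qset U e (q⁻¹*q) := ⟨hqU, hqr, rfl⟩
      have hAU : rep U e (q⁻¹*q) ∈ U := (rep_mem he heU _ ⟨q, hqQ⟩).1
      have hqyU : q * y ∈ U := hU.1 _ hqU _ (hYU hy)
      have hqyQ : q * y ∈ Qset U e ((q*y)⁻¹*(q*y)) := ⟨hqyU, hrqy, rfl⟩
      have hAy_r := Lbase_r hqQ hrqy
      have hAy_d := dAy hqQ (y := y)
      have hAyQ : rep U e (q⁻¹*q) * y ∈ Qset U e ((q*y)⁻¹*(q*y)) :=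
        ⟨hU.1 _ hAU _ (hYU hy), hAy_r, hAy_d⟩
      have hwK := phiK hAyQ
      refine ⟨_, InvGen.base ⟨hwK, q⁻¹*q, y, (q*y)⁻¹*(q*y), ⟨q, hqQ⟩, hy, ⟨q*y, hqyQ⟩, rfl⟩, ?_⟩
      symm
      calc q * (rep U e (q⁻¹*q))⁻¹ * (rep U e (q⁻¹*q) * y * (rep U e ((q*y)⁻¹*(q*y)))⁻¹)
          = (q * (rep U e (q⁻¹*q))⁻¹ * rep U e (q⁻¹*q)) *
            (y * (rep U e ((q*y)⁻¹*(q*y)))⁻¹) := by simp only [mul_assoc]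
        _ = q * (y * (rep U e ((q*y)⁻¹*(q*y)))⁻¹) := by rw [phi_a hqQ]
        _ = (q * y) * (rep U e ((q*y)⁻¹*(q*y)))⁻¹ := by rw [← mul_assoc]
    | @mul u₁ u₂ h1 h2 ih1 ih2 =>
      intro q hqU hqr h
      rw [← mul_assoc q u₁ u₂] at h ⊢
      have h6 := L6 hqr h
      obtain ⟨g₁, hg₁, e₁⟩ := ih1 q hqU hqr h6
      obtain ⟨g₂, hg₂, e₂⟩ := ih2 (q*u₁) (hU.1 _ hqU _ (hmem' _ h1)) h6 h
      exact ⟨g₁*g₂, .mul hg₁ hg₂, by rw [e₂, e₁]; exact mul_assoc _ _ _⟩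
  have KisSub : IsInvSub (Qset U e e) := by
    constructor
    · intro s hs t ht
      refine ⟨hU.1 _ hs.1 _ ht.1, ?_, ?_⟩
      · rw [rconj, ht.2.1, mul_d hs.2.2]; exact hs.2.1
      · rw [dconj, hs.2.2, inv_r ht.2.1]; exact ht.2.2
    · intro s hs
      refine ⟨hU.2 _ hs.1, ?_, ?_⟩
      · rw [ii]; exact hs.2.2
      · rw [ii]; exact hs.2.1
  have GsubK : ∀ g, InvGen (GSet U Y e) g → g ∈ Qset U e e := by
    intro g hg
    induction hg with
    | base h => exact h.1
    | mul _ _ ih1 ih2 => exact KisSub.1 _ ih1 _ ih2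
    | inv _ ih => exact KisSub.2 _ ih
  have KsubG : ∀ u ∈ Qset U e e, InvGen (GSet U Y e) u := by
    intro u hu
    have hee : e⁻¹ = e := inv_idem he
    have her : e * e⁻¹ = e := by rw [hee]; exact he
    have heu : e * u = u := r_mul hu.2.1
    have hru : (e*u)*(e*u)⁻¹ = e := by rw [heu]; exact hu.2.1
    obtain ⟨g, hg, eq⟩ := MI u (hgen u hu.1) e heU her hru
    rw [heu, hu.2.2, hee, he, rep_e] at eq
    rw [hee, mul_d hu.2.2] at eq
    rw [he] at eq
    rw [r_mul (GsubK g hg).2.1] at eq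
    rw [eq]; exact hg
  have hGfin : (GSet U Y e).Finite := by
    have himg : ((fun p : (S×S)×S => rep U e p.1.1 * p.2 * (rep U e p.1.2)⁻¹) ''
        (({x : S | x*x = x} ×ˢ {x : S | x*x = x}) ×ˢ Y)).Finite :=
      Set.Finite.image _ ((hE.prod hE).prod hYfin)
    refine himg.subset ?_
    rintro w ⟨-, f, y, f', hf, hy, hf', rfl⟩
    refine ⟨((f, f'), y), ⟨⟨?_, ?_⟩, hy⟩, rfl⟩
    · obtain ⟨s, hs⟩ := hf; rw [← hs.2.2]; exact didem s
    · obtain ⟨s, hs⟩ := hf'; rw [← hs.2.2]; exact didem s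
  have hKfg : InvFG (Qset U e e) := by
    refine ⟨hGfin.toFinset, ?_, ?_⟩
    · rw [Set.Finite.coe_toFinset]; exact fun w hw => hw.1
    · have hc : (↑hGfin.toFinset : Set S) = GSet U Y e := Set.Finite.coe_toFinset _
      rw [hc]
      ext s
      exact ⟨fun hs => KsubG s hs, fun hs => GsubK s hs⟩
  exact hlf e he (Qset U e e) (fun s hs => ⟨hs.2.1, hs.2.2⟩) KisSub hKfg

end ISG
namespace ISG

variable {S : Type*} [InverseSemigroup S]

lemma finite_of_invFG
    (hE : {e : S | e * e = e}.Finite)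
    (hlf : ∀ e : S, e * e = e →
      ∀ U : Set S, U ⊆ {s : S | s * s⁻¹ = e ∧ s⁻¹ * s = e} →
        IsInvSub U → InvFG U → U.Finite)
    (U : Set S) (hU : IsInvSub U) (hfg : InvFG U) : U.Finite := by
  obtain ⟨X, hXU, hXgen⟩ := hfg
  set Y : Set S := ↑X ∪ (fun x => x⁻¹) '' ↑X with hYdef
  have hYfin : Y.Finite := X.finite_toSet.union (X.finite_toSet.image _)
  have hYU : Y ⊆ U := by
    rintro y (hy | ⟨x, hx, rfl⟩)
    · exact hXU hy
    · exact hU.2 _ (hXU hx)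
  have hgen : ∀ u ∈ U, NGen Y u := by
    intro u hu
    rw [hXgen] at hu
    exact invGen_to_nGen hu
  have hmain : ∀ e : S, e * e = e → e ∈ U → (Qset U e e).Finite :=
    fun e he heU => main hE hlf hU hYfin hYU hgen he heU
  have fib : ∀ p : S × S, p ∈ ({e : S | e*e = e} ×ˢ {e : S | e*e = e} : Set (S × S)) →
      (Qset U p.1 p.2).Finite := by
    rintro ⟨e, f⟩ -
    by_cases hne : (Qset U e f).Nonempty
    · obtain ⟨a₀, ha₀⟩ := hne
      have heidem : e * e = e := by rw [← ha₀.2.1]; exact ridem a₀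
      have heU : e ∈ U := by rw [← ha₀.2.1]; exact hU.1 _ ha₀.1 _ (hU.2 _ ha₀.1)
      have hK := hmain e heidem heU
      apply Set.Finite.of_finite_image (f := fun s => s * a₀⁻¹)
      · apply hK.subset
        rintro _ ⟨s, hs, rfl⟩
        refine ⟨hU.1 _ hs.1 _ (hU.2 _ ha₀.1), ?_, ?_⟩
        · rw [rconj, ii, ha₀.2.2, mul_d hs.2.2]; exact hs.2.1
        · rw [dconj, ii, hs.2.2, mul_d ha₀.2.2]; exact ha₀.2.1
      · intro s hs t ht h
        have h2 : s * a₀⁻¹ * a₀ = t * a₀⁻¹ * a₀ := by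
          simp only at h; rw [h]
        rw [mul_assoc, mul_assoc, ha₀.2.2, mul_d hs.2.2, mul_d ht.2.2] at h2
        exact h2
    · rw [Set.not_nonempty_iff_eq_empty] at hne
      rw [hne]; exact Set.finite_empty
  have hsub : U ⊆ ⋃ p ∈ ({e : S | e*e = e} ×ˢ {e : S | e*e = e} : Set (S × S)),
      Qset U p.1 p.2 := by
    intro s hs
    exact Set.mem_biUnion (show ((s*s⁻¹, s⁻¹*s) : S × S) ∈ _ from ⟨ridem s, didem s⟩)
      ⟨hs, rfl, rfl⟩
  exact ((hE.prod hE).biUnion fib).subset hsub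

end ISG

theorem stmt_17 {S : Type*} [InverseSemigroup S]
    (hE : {e : S | e * e = e}.Finite)
    (hlf : ∀ e : S, e * e = e →
      ∀ U : Set S, U ⊆ {s : S | s * s⁻¹ = e ∧ s⁻¹ * s = e} →
        IsInvSub U → InvFG U → U.Finite) :
    Howson S := by
  intro U V hU hV hUfg hVfg
  have hfin : (U ∩ V).Finite :=
    (ISG.finite_of_invFG hE hlf U hU hUfg).subset Set.inter_subset_left
  have hsub : IsInvSub (U ∩ V) :=
    ⟨fun a ha b hb => ⟨hU.1 a ha.1 b hb.1, hV.1 a ha.2 b hb.2⟩,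
     fun a ha => ⟨hU.2 a ha.1, hV.2 a ha.2⟩⟩
  exact ISG.invFG_of_finite hfin hsub
end

section
/- If S is an ideal extension of the infinite cyclic group ℤ by a finite inverse semigroup with zero (so S has finitely many idempotents and its maximal subgroups are trivial or infinite cyclic), then S has the Howson property. -/
/-- Every inverse subsemigroup of such an S is finitely generated. -/
lemma aux_invfg {S : Type*} [InverseSemigroup S] (Z : Set S)
    (hfin : (Zᶜ : Set S).Finite)
    (φ : ℤ → S) (hrange : Set.range φ = Z)
    (hmul : ∀ a b : ℤ, φ (a + b) = φ a * φ b)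
    (hinv : ∀ a : ℤ, φ (-a) = (φ a)⁻¹)
    (T : Set S) (hT : IsInvSub T) : InvFG T := by
  classical
  by_cases hTZ : (T ∩ Z).Nonempty
  · obtain ⟨z0, hz0T, hz0Z⟩ := hTZ
    obtain ⟨n0, rfl⟩ : ∃ n, φ n = z0 := by rw [← Set.mem_range, hrange]; exact hz0Z
    have hzeroT : φ 0 ∈ T := by
      have : φ n0 * (φ n0)⁻¹ ∈ T := hT.1 _ hz0T _ (hT.2 _ hz0T)
      have h0 : φ (0 : ℤ) = φ n0 * (φ n0)⁻¹ := by
        rw [← hinv, ← hmul]; norm_num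
      rwa [h0]
    set A : AddSubgroup ℤ :=
      { carrier := {n | φ n ∈ T}
        add_mem' := fun {a b} ha hb => by
          simp only [Set.mem_setOf_eq] at *
          rw [hmul]; exact hT.1 _ ha _ hb
        zero_mem' := hzeroT
        neg_mem' := fun {a} ha => by
          simp only [Set.mem_setOf_eq] at *
          rw [hinv]; exact hT.2 _ ha } with hA
    obtain ⟨d, hd⟩ := Int.subgroup_cyclic A
    have hdA : φ d ∈ T := by
      have : d ∈ A := hd ▸ AddSubgroup.subset_closure (Set.mem_singleton d)
      exact this
    have hfinF : (T \ Z).Finite := hfin.subset (fun s hs => hs.2)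
    refine ⟨hfinF.toFinset ∪ {φ d}, ?_, ?_⟩
    · intro s hs
      simp only [Finset.coe_union, Finset.coe_singleton, Set.Finite.coe_toFinset,
        Set.mem_union, Set.mem_singleton_iff] at hs
      rcases hs with h | rfl
      · exact h.1
      · exact hdA
    · set X : Finset S := hfinF.toFinset ∪ {φ d} with hX
      have hdX : φ d ∈ (↑X : Set S) := by simp [hX]
      have h0gen : InvGen (↑X : Set S) (φ 0) := by
        have h0 : φ (0 : ℤ) = φ d * (φ d)⁻¹ := by
          rw [← hinv, ← hmul]; norm_num
        rw [h0]
        exact InvGen.mul (InvGen.base hdX) (InvGen.inv (InvGen.base hdX))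
      have hnat : ∀ n : ℕ, InvGen (↑X : Set S) (φ ((n : ℤ) * d)) := by
        intro n
        induction n with
        | zero => simpa using h0gen
        | succ n ih =>
          have : ((n : ℤ) + 1) * d = (n : ℤ) * d + d := by ring
          rw [Nat.cast_succ, this, hmul]
          exact InvGen.mul ih (InvGen.base hdX)
      have hpos : ∀ k : ℤ, 0 ≤ k → InvGen (↑X : Set S) (φ (k * d)) := by
        intro k hk
        obtain ⟨n, rfl⟩ := Int.eq_ofNat_of_zero_le hk
        exact hnat n
      have hall : ∀ k : ℤ, InvGen (↑X : Set S) (φ (k * d)) := by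
        intro k
        rcases le_or_gt 0 k with hk | hk
        · exact hpos k hk
        · have h1 : φ (k * d) = (φ (-k * d))⁻¹ := by
            rw [← hinv]; ring_nf
          rw [h1]
          exact InvGen.inv (hpos (-k) (by omega))
      ext s
      simp only [Set.mem_setOf_eq]
      constructor
      · intro hs
        by_cases hsZ : s ∈ Z
        · obtain ⟨n, rfl⟩ : ∃ n, φ n = s := by rw [← Set.mem_range, hrange]; exact hsZ
          have hnA : n ∈ A := hs
          rw [hd, AddSubgroup.mem_closure_singleton] at hnA
          obtain ⟨k, hk⟩ := hnA
          have : k * d = n := by simpa using hk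
          rw [← this]
          exact hall k
        · exact InvGen.base (by simp [hX, Set.mem_diff, hs, hsZ])
      · intro hs
        induction hs with
        | base h =>
          simp only [hX, Finset.coe_union, Finset.coe_singleton, Set.Finite.coe_toFinset,
            Set.mem_union, Set.mem_singleton_iff] at h
          rcases h with h | rfl
          · exact h.1
          · exact hdA
        | mul _ _ iha ihb => exact hT.1 _ iha _ ihb
        | inv _ ih => exact hT.2 _ ih
  · have hTsub : T ⊆ Zᶜ := fun s hs hsZ => hTZ ⟨s, hs, hsZ⟩
    have hTfin : T.Finite := hfin.subset hTsub
    refine ⟨hTfin.toFinset, by simp, ?_⟩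
    ext s
    simp only [Set.mem_setOf_eq]
    constructor
    · intro hs
      exact InvGen.base (by simpa using hs)
    · intro hs
      induction hs with
      | base h => simpa using h
      | mul _ _ iha ihb => exact hT.1 _ iha _ ihb
      | inv _ ih => exact hT.2 _ ih

theorem stmt_18 {S : Type*} [InverseSemigroup S] (Z : Set S)
    (hideal : ∀ s : S, ∀ z ∈ Z, s * z ∈ Z ∧ z * s ∈ Z)
    (hfin : (Zᶜ : Set S).Finite)
    (φ : ℤ → S) (hinj : Function.Injective φ) (hrange : Set.range φ = Z)
    (hmul : ∀ a b : ℤ, φ (a + b) = φ a * φ b)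
    (hinv : ∀ a : ℤ, φ (-a) = (φ a)⁻¹) :
    Howson S := by
  intro U V hU hV _ _
  apply aux_invfg Z hfin φ hrange hmul hinv
  exact ⟨fun a ha b hb => ⟨hU.1 a ha.1 b hb.1, hV.1 a ha.2 b hb.2⟩,
    fun a ha => ⟨hU.2 a ha.1, hV.2 a ha.2⟩⟩
end
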